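/- arXiv:0904.4552 — 5 statements merged into one kernel-verified Lean document; each statement's English description precedes it below -/
import Mathlib

section
/- Suppose that for some n ≥ 1 and all tuples (k₁,…,kₙ) ∈ (ℤ/Nℤ)ⁿ one has P(w^{k₁})·⋯·P(w^{kₙ})·P(w^{−(k₁+⋯+kₙ)}) = P'(w^{k₁})·⋯·P'(w^{kₙ})·P'(w^{−(k₁+⋯+kₙ)}). Then for all (r₁,…,rₙ) ∈ (ℤ/Nℤ)ⁿ, Σ_{s ∈ ℤ/Nℤ} c(s)·c(s+r₁)·⋯·c(s+rₙ) = Σ_{s ∈ ℤ/Nℤ} c'(s)·c'(s+r₁)·⋯·c'(s+rₙ); that is, coincidence of the Fourier-side products implies coincidence of all (n+1)-point pattern frequencies. -/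
open Finset

section aux

variable {N : ℕ} [NeZero N] {w : ℂ}

noncomputable def ee (w : ℂ) (a : ZMod N) : ℂ := w ^ a.val

lemma aux_pow_N (hw : w = Complex.exp (-(2 * Real.pi * Complex.I) / N)) : w ^ N = 1 := by
  have hN : (N : ℂ) ≠ 0 := Nat.cast_ne_zero.mpr (NeZero.ne N)
  rw [hw, ← Complex.exp_nat_mul]
  have : (N : ℂ) * (-(2 * Real.pi * Complex.I) / N) = -(2 * Real.pi * Complex.I) := by
    field_simp
  rw [this, Complex.exp_neg, Complex.exp_two_pi_mul_I, inv_one]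

lemma aux_prim (hw : w = Complex.exp (-(2 * Real.pi * Complex.I) / N)) :
    IsPrimitiveRoot w N := by
  have h := Complex.isPrimitiveRoot_exp N (NeZero.ne N)
  have : w = (Complex.exp (2 * Real.pi * Complex.I / N))⁻¹ := by
    rw [hw, ← Complex.exp_neg, neg_div]
  rw [this]
  exact h.inv

lemma aux_pow_mod (hw : w = Complex.exp (-(2 * Real.pi * Complex.I) / N)) (m : ℕ) :
    w ^ (m % N) = w ^ m := by
  conv_rhs => rw [← Nat.div_add_mod m N]
  rw [pow_add, pow_mul, aux_pow_N hw, one_pow, one_mul]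

lemma ee_natCast (hw : w = Complex.exp (-(2 * Real.pi * Complex.I) / N)) (m : ℕ) :
    ee w (m : ZMod N) = w ^ m := by
  rw [ee, ZMod.val_natCast, aux_pow_mod hw]

lemma ee_zero : ee w (0 : ZMod N) = 1 := by simp [ee]

lemma ee_add (hw : w = Complex.exp (-(2 * Real.pi * Complex.I) / N)) (a b : ZMod N) :
    ee w (a + b) = ee w a * ee w b := by
  have h : a + b = ((a.val + b.val : ℕ) : ZMod N) := by push_cast [ZMod.natCast_val]; simp
  rw [h, ee_natCast hw, pow_add]; rfl

lemma ee_sum (hw : w = Complex.exp (-(2 * Real.pi * Complex.I) / N)) {ι : Type*}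
    (s : Finset ι) (f : ι → ZMod N) :
    ee w (∑ i ∈ s, f i) = ∏ i ∈ s, ee w (f i) := by
  classical
  induction s using Finset.induction_on with
  | empty => simp [ee_zero]
  | insert a s hx ih => simp [Finset.sum_insert hx, Finset.prod_insert hx,
      ee_add hw, ih]

lemma sum_range_eq (f : ZMod N → ℂ) :
    ∑ j ∈ Finset.range N, f (j : ZMod N) = ∑ j : ZMod N, f j := by
  refine Finset.sum_nbij' (fun j => (j : ZMod N)) (fun x => x.val) ?_ ?_ ?_ ?_ ?_
  · intros; exact Finset.mem_univ _
  · intro a _; exact Finset.mem_range.mpr (ZMod.val_lt a)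
  · intro a ha; exact ZMod.val_natCast_of_lt (Finset.mem_range.mp ha)
  · intro a _; exact ZMod.natCast_rightInverse a
  · intros; rfl

lemma ortho (hw : w = Complex.exp (-(2 * Real.pi * Complex.I) / N)) (x : ZMod N) :
    ∑ k : ZMod N, ee w (k * x) = if x = 0 then (N : ℂ) else 0 := by
  have hkx : ∀ k : ZMod N, ee w (k * x) = (w ^ x.val) ^ k.val := by
    intro k
    have h : k * x = ((k.val * x.val : ℕ) : ZMod N) := by
      push_cast [ZMod.natCast_val]; simp
    rw [h, ee_natCast hw, mul_comm, pow_mul]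
  simp only [hkx]
  rw [← sum_range_eq (fun k => (w ^ x.val) ^ k.val)]
  have hvals : ∀ j ∈ Finset.range N, (w ^ x.val) ^ ((j : ZMod N)).val = (w ^ x.val) ^ j := by
    intro j hj; rw [ZMod.val_natCast_of_lt (Finset.mem_range.mp hj)]
  rw [Finset.sum_congr rfl hvals]
  by_cases hx : x = 0
  · simp [hx]
  · rw [if_neg hx]
    have hne1 : w ^ x.val ≠ 1 := by
      apply (aux_prim hw).pow_ne_one_of_pos_of_lt
      · exact fun h => hx ((ZMod.val_eq_zero x).mp h)
      · exact ZMod.val_lt x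
    rw [geom_sum_eq hne1]
    have : (w ^ x.val) ^ N = 1 := by
      rw [← pow_mul, mul_comm, pow_mul, aux_pow_N hw, one_pow]
    rw [this, sub_self, zero_div]

lemma myInnerSum (hw : w = Complex.exp (-(2 * Real.pi * Complex.I) / N))
    (c : ZMod N → ℂ) (t : ZMod N) :
    ∑ κ : ZMod N, (∑ j : ZMod N, c j * ee w (κ * j)) * ee w (-(κ * t)) = N * c t := by
  have step : ∀ κ : ZMod N,
      (∑ j : ZMod N, c j * ee w (κ * j)) * ee w (-(κ * t))
        = ∑ j : ZMod N, c j * ee w (κ * (j - t)) := by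
    intro κ
    rw [Finset.sum_mul]
    refine Finset.sum_congr rfl fun j _ => ?_
    rw [mul_assoc, ← ee_add hw]
    ring_nf
  simp only [step]
  rw [Finset.sum_comm]
  have : ∀ j : ZMod N, ∑ κ : ZMod N, c j * ee w (κ * (j - t))
      = c j * (if j - t = 0 then (N : ℂ) else 0) := by
    intro j
    rw [← Finset.mul_sum, ortho hw]
  simp only [this, sub_eq_zero, mul_ite, mul_zero]
  rw [Finset.sum_ite_eq' Finset.univ t (fun j => c j * (N : ℂ))]
  simp [mul_comm]

end aux

open Finset in
/-- If two weight functions `c, c' : ℤ/Nℤ → ℂ` have the property that the Fourier-side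
products `P(w^{k₁})⋯P(w^{kₙ})·P(w^{−(k₁+⋯+kₙ)})` coincide for all tuples `(k₁,…,kₙ)`,
then all their (n+1)-point pattern frequencies coincide. Here `w = e^{-2πi/N}` and
`P(z) = Σ_{j=0}^{N-1} c(j) z^j`, `P'(z) = Σ_{j=0}^{N-1} c'(j) z^j`. -/
theorem fourier_products_eq_implies_pattern_frequencies_eq
    (N : ℕ) [NeZero N] (c c' : ZMod N → ℂ)
    (w : ℂ) (hw : w = Complex.exp (-(2 * Real.pi * Complex.I) / N))
    (P P' : ℂ → ℂ)
    (hP : ∀ z : ℂ, P z = ∑ j ∈ Finset.range N, c j * z ^ j)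
    (hP' : ∀ z : ℂ, P' z = ∑ j ∈ Finset.range N, c' j * z ^ j)
    (n : ℕ) (hn : 1 ≤ n)
    (h : ∀ k : Fin n → ZMod N,
      (∏ i, P (w ^ (k i).val)) * P (w ^ (-(∑ i, k i)).val)
        = (∏ i, P' (w ^ (k i).val)) * P' (w ^ (-(∑ i, k i)).val)) :
    ∀ r : Fin n → ZMod N,
      ∑ s : ZMod N, c s * ∏ i, c (s + r i)
        = ∑ s : ZMod N, c' s * ∏ i, c' (s + r i) := by
  classical
  intro r
  -- P evaluated at ee w a
  have hPee : ∀ (d : ZMod N → ℂ) (Q : ℂ → ℂ)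
      (hQ : ∀ z : ℂ, Q z = ∑ j ∈ Finset.range N, d j * z ^ j) (a : ZMod N),
      Q (ee w a) = ∑ j : ZMod N, d j * ee w (a * j) := by
    intro d Q hQ a
    rw [hQ]
    rw [← sum_range_eq (fun j => d j * ee w (a * j))]
    refine Finset.sum_congr rfl fun j hj => ?_
    congr 1
    have h1 : a * (j : ZMod N) = ((a.val * j : ℕ) : ZMod N) := by
      push_cast [ZMod.natCast_val]; simp
    rw [h1, ee_natCast hw, pow_mul]
    rfl
  -- key: the weighted sum of Fourier products equals N^n times the pattern frequency
  have key : ∀ (d : ZMod N → ℂ) (Q : ℂ → ℂ)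
      (hQ : ∀ z : ℂ, Q z = ∑ j ∈ Finset.range N, d j * z ^ j),
      ∑ k : Fin n → ZMod N,
        ((∏ i, Q (w ^ (k i).val)) * Q (w ^ (-(∑ i, k i)).val)) * ∏ i, ee w (-(k i * r i))
      = (N : ℂ) ^ n * ∑ s : ZMod N, d s * ∏ i, d (s + r i) := by
    intro d Q hQ
    have e1 : ∀ k : Fin n → ZMod N,
        ((∏ i, Q (w ^ (k i).val)) * Q (w ^ (-(∑ i, k i)).val)) * ∏ i, ee w (-(k i * r i))
        = ∑ s : ZMod N, d s *
            ∏ i, ((∑ j : ZMod N, d j * ee w (k i * j)) * (ee w (-(k i * r i)) * ee w (-(k i * s)))) := by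
      intro k
      have hQk : ∀ a : ZMod N, Q (w ^ a.val) = ∑ j : ZMod N, d j * ee w (a * j) :=
        fun a => hPee d Q hQ a
      simp only [hQk]
      have hneg : ∀ s : ZMod N, ee w ((-(∑ i, k i)) * s) = ∏ i, ee w (-(k i * s)) := by
        intro s
        have : (-(∑ i, k i)) * s = ∑ i, -(k i * s) := by
          rw [neg_mul, Finset.sum_mul, ← Finset.sum_neg_distrib]

        rw [this, ee_sum hw]
      calc ((∏ i, ∑ j : ZMod N, d j * ee w (k i * j)) *
              ∑ s : ZMod N, d s * ee w ((-(∑ i, k i)) * s)) * ∏ i, ee w (-(k i * r i))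
          = ∑ s : ZMod N, d s * ((∏ i, ∑ j : ZMod N, d j * ee w (k i * j)) *
              (∏ i, ee w (-(k i * r i))) * ∏ i, ee w (-(k i * s))) := by
            rw [Finset.mul_sum, Finset.sum_mul]
            refine Finset.sum_congr rfl fun s _ => ?_
            rw [hneg s]; ring
        _ = ∑ s : ZMod N, d s *
            ∏ i, ((∑ j : ZMod N, d j * ee w (k i * j)) * (ee w (-(k i * r i)) * ee w (-(k i * s)))) := by
            refine Finset.sum_congr rfl fun s _ => ?_
            congr 1
            rw [← Finset.prod_mul_distrib, ← Finset.prod_mul_distrib]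
            exact Finset.prod_congr rfl fun i _ => by ring
    simp only [e1]
    rw [Finset.sum_comm, Finset.mul_sum]
    refine Finset.sum_congr rfl fun s _ => ?_
    rw [← Finset.mul_sum]
    have step2 : ∑ k : Fin n → ZMod N,
        ∏ i, ((∑ j : ZMod N, d j * ee w (k i * j)) * (ee w (-(k i * r i)) * ee w (-(k i * s))))
        = ∏ i : Fin n, ((N : ℂ) * d (s + r i)) := by
      have hps := Finset.prod_univ_sum (fun _ : Fin n => (Finset.univ : Finset (ZMod N)))
        (fun i κ => (∑ j : ZMod N, d j * ee w (κ * j)) * (ee w (-(κ * r i)) * ee w (-(κ * s))))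
      rw [← Fintype.piFinset_univ, ← hps]
      refine Finset.prod_congr rfl fun i _ => ?_
      have hcomb : ∀ κ : ZMod N,
          (∑ j : ZMod N, d j * ee w (κ * j)) * (ee w (-(κ * r i)) * ee w (-(κ * s)))
          = (∑ j : ZMod N, d j * ee w (κ * j)) * ee w (-(κ * (r i + s))) := by
        intro κ
        rw [← ee_add hw]
        congr 2
        ring
      rw [Finset.sum_congr rfl fun κ _ => hcomb κ, myInnerSum hw d (r i + s), add_comm (r i) s]
    rw [step2, Finset.prod_mul_distrib, Finset.prod_const, Finset.card_univ, Fintype.card_fin]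
    ring
  have hNn : ((N : ℂ) ^ n) ≠ 0 := pow_ne_zero _ (Nat.cast_ne_zero.mpr (NeZero.ne N))
  have := key c P hP
  have h2 := key c' P' hP'
  have h3 : ∑ k : Fin n → ZMod N,
        ((∏ i, P (w ^ (k i).val)) * P (w ^ (-(∑ i, k i)).val)) * ∏ i, ee w (-(k i * r i))
      = ∑ k : Fin n → ZMod N,
        ((∏ i, P' (w ^ (k i).val)) * P' (w ^ (-(∑ i, k i)).val)) * ∏ i, ee w (-(k i * r i)) :=
    Finset.sum_congr rfl fun k _ => by rw [h k]
  rw [this, h2] at h3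
  exact mul_left_cancel₀ hNn h3
end

section
/- For every k ∈ ℤ, P₁(ζᵏ)·P₁(ζ⁻ᵏ) = P₂(ζᵏ)·P₂(ζ⁻ᵏ). -/
/-- The first weight polynomial, as a function ℂ → ℂ. -/
noncomputable def P1 : ℂ → ℂ := fun z => 11 + 25 * z + 42 * z ^ 2 + 45 * z ^ 3 + 31 * z ^ 4 + 14 * z ^ 5

/-- The second weight polynomial, as a function ℂ → ℂ. -/
noncomputable def P2 : ℂ → ℂ := fun z => 10 + 21 * z + 39 * z ^ 2 + 46 * z ^ 3 + 35 * z ^ 4 + 17 * z ^ 5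

/-- For every integer `k`, `P₁(ζᵏ)·P₁(ζ⁻ᵏ) = P₂(ζᵏ)·P₂(ζ⁻ᵏ)`, where `ζ` is a primitive
6th root of unity. -/
theorem two_fold_products_eq (ζ : ℂ) (hζ : IsPrimitiveRoot ζ 6) (k : ℤ) :
    P1 (ζ ^ k) * P1 (ζ ^ (-k)) = P2 (ζ ^ k) * P2 (ζ ^ (-k)) := by
  have hζ6 : ζ ^ (6 : ℕ) = 1 := hζ.pow_eq_one
  have hζ0 : ζ ≠ 0 := hζ.ne_zero (by norm_num)
  set w : ℂ := ζ ^ k with hw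
  have hw0 : w ≠ 0 := zpow_ne_zero k hζ0
  have hw6 : w ^ 6 = 1 := by
    rw [hw, ← zpow_natCast (ζ ^ k) 6, ← zpow_mul, mul_comm, zpow_mul, zpow_natCast, hζ6, one_zpow]
  have hinv : ζ ^ (-k) = w⁻¹ := by rw [hw, zpow_neg]
  rw [hinv]
  have hinv5 : w⁻¹ = w ^ 5 := by
    exact (eq_inv_of_mul_eq_one_left (by linear_combination hw6)).symm
  rw [hinv5]
  simp only [P1, P2]
  linear_combination ((-21) + (-65)*w + (-72)*w^2 + (-35)*w^3 + (9)*w^4 + (-49)*w^5 + (-205)*w^6 + (-296)*w^7 + (-231)*w^8 + (-75)*w^9 + (-56)*w^10 + (-280)*w^11 + (-448)*w^12 + (-392)*w^13 + (-168)*w^14 + (-35)*w^15 + (-215)*w^16 + (-376)*w^17 + (-357)*w^18 + (-177)*w^19 + (-7)*w^20 + (-75)*w^21 + (-152)*w^22 + (-161)*w^23 + (-93)*w^24) * hw6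
end

section
/- For all integers j, k, l, r, the five-fold products agree: P₁(ζʲ)·P₁(ζᵏ)·P₁(ζˡ)·P₁(ζʳ)·P₁(ζ^{−(j+k+l+r)}) = P₂(ζʲ)·P₂(ζᵏ)·P₂(ζˡ)·P₂(ζʳ)·P₂(ζ^{−(j+k+l+r)}). -/
/-- Multiplication in ℤ[ζ] with ζ² = ζ - 1, elements as pairs (a, b) ↦ a + bζ. -/
def mulz (p q : ℤ × ℤ) : ℤ × ℤ := (p.1 * q.1 - p.2 * q.2, p.1 * q.2 + p.2 * q.1 + p.2 * q.2)

def v1 : ZMod 6 → ℤ × ℤ := fun a =>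
  match a.val with
  | 0 => (168, 0) | 1 => (-62, 22) | 5 => (-40, -22) | _ => (0, 0)

def v2 : ZMod 6 → ℤ × ℤ := fun a =>
  match a.val with
  | 0 => (168, 0) | 1 => (-58, 8) | 5 => (-50, -8) | _ => (0, 0)

noncomputable def ev (ζ : ℂ) (p : ℤ × ℤ) : ℂ := (p.1 : ℂ) + (p.2 : ℂ) * ζ

lemma ev_mul (ζ : ℂ) (hq : ζ ^ 2 = ζ - 1) (p q : ℤ × ℤ) :
    ev ζ p * ev ζ q = ev ζ (mulz p q) := by
  simp only [ev, mulz]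
  push_cast
  linear_combination ((p.2 : ℂ) * (q.2 : ℂ)) * hq

lemma core : ∀ a b c d : ZMod 6,
    mulz (mulz (mulz (mulz (v1 a) (v1 b)) (v1 c)) (v1 d)) (v1 (-(a + b + c + d)))
      = mulz (mulz (mulz (mulz (v2 a) (v2 b)) (v2 c)) (v2 d)) (v2 (-(a + b + c + d))) := by
  decide

lemma hval1 (ζ : ℂ) (hq : ζ ^ 2 = ζ - 1) : ∀ a : ZMod 6, P1 (ζ ^ a.val) = ev ζ (v1 a) := by
  intro a
  fin_cases a
  · show P1 (ζ ^ (0 : ℕ)) = ((168 : ℤ) : ℂ) + ((0 : ℤ) : ℂ) * ζ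
    simp only [P1]
    push_cast
    ring
  · show P1 (ζ ^ (1 : ℕ)) = ((-62 : ℤ) : ℂ) + ((22 : ℤ) : ℂ) * ζ
    simp only [P1]
    push_cast
    linear_combination ((73:ℂ) + (76:ℂ)*ζ + (45:ℂ)*ζ^2 + (14:ℂ)*ζ^3) * hq
  · show P1 (ζ ^ (2 : ℕ)) = ((0 : ℤ) : ℂ) + ((0 : ℤ) : ℂ) * ζ
    simp only [P1]
    push_cast
    linear_combination ((11:ℂ) + (11:ℂ)*ζ + (25:ℂ)*ζ^2 + (14:ℂ)*ζ^3 + (31:ℂ)*ζ^4 + (17:ℂ)*ζ^5 + (31:ℂ)*ζ^6 + (14:ℂ)*ζ^7 + (14:ℂ)*ζ^8) * hq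
  · show P1 (ζ ^ (3 : ℕ)) = ((0 : ℤ) : ℂ) + ((0 : ℤ) : ℂ) * ζ
    simp only [P1]
    push_cast
    linear_combination ((11:ℂ) + (11:ℂ)*ζ + (14:ℂ)*ζ^3 + (14:ℂ)*ζ^4 + (28:ℂ)*ζ^6 + (28:ℂ)*ζ^7 + (17:ℂ)*ζ^9 + (17:ℂ)*ζ^10 + (14:ℂ)*ζ^12 + (14:ℂ)*ζ^13) * hq
  · show P1 (ζ ^ (4 : ℕ)) = ((0 : ℤ) : ℂ) + ((0 : ℤ) : ℂ) * ζ
    simp only [P1]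
    push_cast
    linear_combination ((11:ℂ) + (11:ℂ)*ζ - (11:ℂ)*ζ^3 + (14:ℂ)*ζ^4 + (25:ℂ)*ζ^5 + (11:ℂ)*ζ^6 - (14:ℂ)*ζ^7 + (17:ℂ)*ζ^8 + (31:ℂ)*ζ^9 + (14:ℂ)*ζ^10 - (17:ℂ)*ζ^11 + (14:ℂ)*ζ^12 + (31:ℂ)*ζ^13 + (17:ℂ)*ζ^14 - (14:ℂ)*ζ^15 + (14:ℂ)*ζ^17 + (14:ℂ)*ζ^18) * hq
  · show P1 (ζ ^ (5 : ℕ)) = ((-40 : ℤ) : ℂ) + ((-22 : ℤ) : ℂ) * ζ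
    simp only [P1]
    push_cast
    linear_combination ((51:ℂ) + (73:ℂ)*ζ + (22:ℂ)*ζ^2 - (51:ℂ)*ζ^3 - (73:ℂ)*ζ^4 + (3:ℂ)*ζ^5 + (76:ℂ)*ζ^6 + (73:ℂ)*ζ^7 - (3:ℂ)*ζ^8 - (76:ℂ)*ζ^9 - (31:ℂ)*ζ^10 + (45:ℂ)*ζ^11 + (76:ℂ)*ζ^12 + (31:ℂ)*ζ^13 - (45:ℂ)*ζ^14 - (31:ℂ)*ζ^15 + (14:ℂ)*ζ^16 + (45:ℂ)*ζ^17 + (31:ℂ)*ζ^18 - (14:ℂ)*ζ^19 - (14:ℂ)*ζ^20 + (14:ℂ)*ζ^22 + (14:ℂ)*ζ^23) * hq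

lemma hval2 (ζ : ℂ) (hq : ζ ^ 2 = ζ - 1) : ∀ a : ZMod 6, P2 (ζ ^ a.val) = ev ζ (v2 a) := by
  intro a
  fin_cases a
  · show P2 (ζ ^ (0 : ℕ)) = ((168 : ℤ) : ℂ) + ((0 : ℤ) : ℂ) * ζ
    simp only [P2]
    push_cast
    ring
  · show P2 (ζ ^ (1 : ℕ)) = ((-58 : ℤ) : ℂ) + ((8 : ℤ) : ℂ) * ζ
    simp only [P2]
    push_cast
    linear_combination ((68:ℂ) + (81:ℂ)*ζ + (52:ℂ)*ζ^2 + (17:ℂ)*ζ^3) * hq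
  · show P2 (ζ ^ (2 : ℕ)) = ((0 : ℤ) : ℂ) + ((0 : ℤ) : ℂ) * ζ
    simp only [P2]
    push_cast
    linear_combination ((10:ℂ) + (10:ℂ)*ζ + (21:ℂ)*ζ^2 + (11:ℂ)*ζ^3 + (29:ℂ)*ζ^4 + (18:ℂ)*ζ^5 + (35:ℂ)*ζ^6 + (17:ℂ)*ζ^7 + (17:ℂ)*ζ^8) * hq
  · show P2 (ζ ^ (3 : ℕ)) = ((0 : ℤ) : ℂ) + ((0 : ℤ) : ℂ) * ζ
    simp only [P2]
    push_cast
    linear_combination ((10:ℂ) + (10:ℂ)*ζ + (11:ℂ)*ζ^3 + (11:ℂ)*ζ^4 + (28:ℂ)*ζ^6 + (28:ℂ)*ζ^7 + (18:ℂ)*ζ^9 + (18:ℂ)*ζ^10 + (17:ℂ)*ζ^12 + (17:ℂ)*ζ^13) * hq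
  · show P2 (ζ ^ (4 : ℕ)) = ((0 : ℤ) : ℂ) + ((0 : ℤ) : ℂ) * ζ
    simp only [P2]
    push_cast
    linear_combination ((10:ℂ) + (10:ℂ)*ζ - (10:ℂ)*ζ^3 + (11:ℂ)*ζ^4 + (21:ℂ)*ζ^5 + (10:ℂ)*ζ^6 - (11:ℂ)*ζ^7 + (18:ℂ)*ζ^8 + (29:ℂ)*ζ^9 + (11:ℂ)*ζ^10 - (18:ℂ)*ζ^11 + (17:ℂ)*ζ^12 + (35:ℂ)*ζ^13 + (18:ℂ)*ζ^14 - (17:ℂ)*ζ^15 + (17:ℂ)*ζ^17 + (17:ℂ)*ζ^18) * hq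
  · show P2 (ζ ^ (5 : ℕ)) = ((-50 : ℤ) : ℂ) + ((-8 : ℤ) : ℂ) * ζ
    simp only [P2]
    push_cast
    linear_combination ((60:ℂ) + (68:ℂ)*ζ + (8:ℂ)*ζ^2 - (60:ℂ)*ζ^3 - (68:ℂ)*ζ^4 + (13:ℂ)*ζ^5 + (81:ℂ)*ζ^6 + (68:ℂ)*ζ^7 - (13:ℂ)*ζ^8 - (81:ℂ)*ζ^9 - (29:ℂ)*ζ^10 + (52:ℂ)*ζ^11 + (81:ℂ)*ζ^12 + (29:ℂ)*ζ^13 - (52:ℂ)*ζ^14 - (35:ℂ)*ζ^15 + (17:ℂ)*ζ^16 + (52:ℂ)*ζ^17 + (35:ℂ)*ζ^18 - (17:ℂ)*ζ^19 - (17:ℂ)*ζ^20 + (17:ℂ)*ζ^22 + (17:ℂ)*ζ^23) * hq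

/-- For all integers j, k, l, r the five-fold products of values of P₁ and of P₂ at the
corresponding powers of a primitive 6th root of unity ζ agree. -/
theorem five_fold_products_eq (ζ : ℂ) (hζ : IsPrimitiveRoot ζ 6) (j k l r : ℤ) :
    P1 (ζ ^ j) * P1 (ζ ^ k) * P1 (ζ ^ l) * P1 (ζ ^ r) * P1 (ζ ^ (-(j + k + l + r)))
      = P2 (ζ ^ j) * P2 (ζ ^ k) * P2 (ζ ^ l) * P2 (ζ ^ r) * P2 (ζ ^ (-(j + k + l + r))) := by
  have h6 : ζ ^ (6 : ℕ) = 1 := hζ.pow_eq_one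
  have hne : ζ ≠ 0 := by
    intro h
    rw [h] at h6
    norm_num at h6
  -- ζ² = ζ - 1
  have hq : ζ ^ 2 = ζ - 1 := by
    have h3 : ζ ^ (3 : ℕ) ≠ 1 := hζ.pow_ne_one_of_pos_of_lt (by norm_num) (by norm_num)
    have h2 : ζ ^ (2 : ℕ) ≠ 1 := hζ.pow_ne_one_of_pos_of_lt (by norm_num) (by norm_num)
    have hsplit : (ζ ^ 3 - 1) * (ζ ^ 3 + 1) = 0 := by linear_combination h6
    rcases mul_eq_zero.1 hsplit with h | h
    · exact absurd (by linear_combination h) h3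
    · have hsplit2 : (ζ + 1) * (ζ ^ 2 - ζ + 1) = 0 := by linear_combination h
      rcases mul_eq_zero.1 hsplit2 with h' | h'
      · have : ζ = -1 := by linear_combination h'
        rw [this] at h2
        norm_num at h2
      · linear_combination h'
  -- exponent reduction
  have hred : ∀ n : ℤ, ζ ^ n = ζ ^ (((n : ZMod 6)).val) := by
    intro n
    have hval : (((n : ZMod 6)).val : ℤ) = n % 6 := ZMod.val_intCast n
    have h1 : ζ ^ n = ζ ^ (6 * (n / 6) + n % 6) := by rw [Int.mul_ediv_add_emod]
    rw [h1, zpow_add₀ hne, zpow_mul]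
    have h2 : ζ ^ (6 : ℤ) = 1 := by
      rw [show (6 : ℤ) = ((6 : ℕ) : ℤ) by norm_num, zpow_natCast, h6]
    rw [h2, one_zpow, one_mul, ← hval, zpow_natCast]
  rw [hred j, hred k, hred l, hred r, hred (-(j + k + l + r))]
  have hsum : (((-(j + k + l + r) : ℤ)) : ZMod 6)
      = -((j : ZMod 6) + (k : ZMod 6) + (l : ZMod 6) + (r : ZMod 6)) := by push_cast; ring
  rw [hsum]
  rw [hval1 ζ hq, hval1 ζ hq, hval1 ζ hq, hval1 ζ hq, hval1 ζ hq,
      hval2 ζ hq, hval2 ζ hq, hval2 ζ hq, hval2 ζ hq, hval2 ζ hq]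
  simp only [ev_mul ζ hq]
  exact congrArg (ev ζ) (core _ _ _ _)
end

section
/- L₀ is a subgroup of 𝓛, and the quotient group 𝓛/L₀ is isomorphic to ℤ/6ℤ. -/
private lemma num_eq {q : ℚ} {m : ℤ} (h : (m : ℚ) = q) : q.num = m := by
  subst h; exact Rat.num_intCast m

noncomputable def F4L : AddSubgroup (Fin 4 → ℚ) where
  carrier := {v | (∀ i, ∃ m : ℤ, (m : ℚ) = 2 * v i) ∧
          ((∀ i, ∃ m : ℤ, Even m ∧ (m : ℚ) = 2 * v i) ∨
           (∀ i, ∃ m : ℤ, Odd m ∧ (m : ℚ) = 2 * v i))}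
  zero_mem' := ⟨fun i => ⟨0, by simp⟩, Or.inl fun i => ⟨0, Even.zero, by simp⟩⟩
  add_mem' := by
    rintro v w ⟨hv1, hv2⟩ ⟨hw1, hw2⟩
    refine ⟨fun i => ?_, ?_⟩
    · obtain ⟨m, hm⟩ := hv1 i
      obtain ⟨m', hm'⟩ := hw1 i
      exact ⟨m + m', by push_cast [hm, hm']; simp [Pi.add_apply]; ring⟩
    · rcases hv2 with hv | hv <;> rcases hw2 with hw | hw
      · refine Or.inl fun i => ?_
        obtain ⟨m, hme, hm⟩ := hv i; obtain ⟨m', hme', hm'⟩ := hw i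
        exact ⟨m + m', hme.add hme', by push_cast [hm, hm']; simp [Pi.add_apply]; ring⟩
      · refine Or.inr fun i => ?_
        obtain ⟨m, hme, hm⟩ := hv i; obtain ⟨m', hme', hm'⟩ := hw i
        exact ⟨m + m', hme.add_odd hme', by push_cast [hm, hm']; simp [Pi.add_apply]; ring⟩
      · refine Or.inr fun i => ?_
        obtain ⟨m, hme, hm⟩ := hv i; obtain ⟨m', hme', hm'⟩ := hw i
        exact ⟨m + m', hme.add_even hme', by push_cast [hm, hm']; simp [Pi.add_apply]; ring⟩
      · refine Or.inl fun i => ?_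
        obtain ⟨m, hme, hm⟩ := hv i; obtain ⟨m', hme', hm'⟩ := hw i
        exact ⟨m + m', hme.add_odd hme', by push_cast [hm, hm']; simp [Pi.add_apply]; ring⟩
  neg_mem' := by
    rintro v ⟨hv1, hv2⟩
    refine ⟨fun i => ?_, ?_⟩
    · obtain ⟨m, hm⟩ := hv1 i
      exact ⟨-m, by push_cast [hm]; simp [Pi.neg_apply]⟩
    · rcases hv2 with hv | hv
      · refine Or.inl fun i => ?_
        obtain ⟨m, hme, hm⟩ := hv i
        exact ⟨-m, hme.neg, by push_cast [hm]; simp [Pi.neg_apply]⟩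
      · refine Or.inr fun i => ?_
        obtain ⟨m, hme, hm⟩ := hv i
        exact ⟨-m, hme.neg, by push_cast [hm]; simp [Pi.neg_apply]⟩

noncomputable def F4L0 : AddSubgroup (Fin 4 → ℚ) where
  carrier := {v | ∃ k : Fin 4 → ℤ, (∀ i, (k i : ℚ) = v i) ∧
          (3 : ℤ) ∣ (k 0 + k 1 + k 2 + k 3)}
  zero_mem' := ⟨0, fun i => by simp, by simp⟩
  add_mem' := by
    rintro v w ⟨k, hk, hk3⟩ ⟨k', hk', hk3'⟩
    exact ⟨k + k', fun i => by simp only [Pi.add_apply]; push_cast; rw [hk i, hk' i],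
      by simp only [Pi.add_apply]; omega⟩
  neg_mem' := by
    rintro v ⟨k, hk, hk3⟩
    exact ⟨-k, fun i => by simp only [Pi.neg_apply]; push_cast; rw [hk i],
      by simp only [Pi.neg_apply]; omega⟩

noncomputable def F4f : F4L →+ ZMod 6 :=
  AddMonoidHom.mk' (fun v => ((3 * (2 * v.1 0).num +
      2 * ((2 * v.1 0).num + (2 * v.1 1).num + (2 * v.1 2).num + (2 * v.1 3).num) : ℤ) : ZMod 6))
    (by
      intro a b
      have key : ∀ i, (2 * (a.1 + b.1) i).num = (2 * a.1 i).num + (2 * b.1 i).num := by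
        intro i
        obtain ⟨m, hm⟩ := a.2.1 i
        obtain ⟨m', hm'⟩ := b.2.1 i
        have h3 : ((m + m' : ℤ) : ℚ) = 2 * (a.1 + b.1) i := by
          simp only [Pi.add_apply]; push_cast; rw [mul_add, ← hm, ← hm']
        rw [num_eq hm, num_eq hm', num_eq h3]
      show ((_ : ℤ) : ZMod 6) = _
      have hab : ((a + b : F4L) : Fin 4 → ℚ) = a.1 + b.1 := rfl
      simp only [hab, key]
      push_cast
      ring)

lemma F4f_ker : ∀ v : F4L, F4f v = 0 ↔ (v : Fin 4 → ℚ) ∈ F4L0 := by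
  rintro ⟨v, hv1, hv2⟩
  have h0 : F4f ⟨v, hv1, hv2⟩ = ((3 * (2 * v 0).num +
      2 * ((2 * v 0).num + (2 * v 1).num + (2 * v 2).num + (2 * v 3).num) : ℤ) : ZMod 6) := rfl
  rw [h0, ZMod.intCast_zmod_eq_zero_iff_dvd]
  constructor
  · intro hdvd
    norm_num at hdvd
    rcases hv2 with hv | hv
    · -- all even
      have hk : ∀ i, ∃ k : ℤ, (k : ℚ) = v i ∧ (2 * v i).num = 2 * k := by
        intro i
        obtain ⟨m, ⟨k, hk⟩, hm⟩ := hv i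
        refine ⟨k, ?_, ?_⟩
        · have : ((2 * k : ℤ) : ℚ) = 2 * v i := by rw [← hm, hk]; push_cast; ring
          push_cast at this; linarith
        · rw [num_eq hm, hk]; ring
      obtain ⟨k0, hk0, hn0⟩ := hk 0
      obtain ⟨k1, hk1, hn1⟩ := hk 1
      obtain ⟨k2, hk2, hn2⟩ := hk 2
      obtain ⟨k3, hk3, hn3⟩ := hk 3
      refine ⟨![k0, k1, k2, k3], ?_, ?_⟩
      · intro i; fin_cases i <;> simpa
      · show (3:ℤ) ∣ k0 + k1 + k2 + k3
        rw [hn0, hn1, hn2, hn3] at hdvd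
        omega
    · -- all odd: contradiction
      exfalso
      obtain ⟨m, hmo, hm⟩ := hv 0
      rw [num_eq hm] at hdvd
      obtain ⟨t, ht⟩ := hmo
      omega
  · rintro ⟨k, hk, hk3⟩
    have hn : ∀ i, (2 * v i).num = 2 * k i := by
      intro i
      have : ((2 * k i : ℤ) : ℚ) = 2 * v i := by push_cast; rw [hk i]
      rw [num_eq this]
    rw [hn 0, hn 1, hn 2, hn 3]
    omega

lemma F4f_surj : Function.Surjective F4f := by
  intro z
  have hh : (fun _ => (1 : ℚ)/2 : Fin 4 → ℚ) ∈ F4L := by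
    refine ⟨fun i => ⟨1, by norm_num⟩, Or.inr fun i => ⟨1, odd_one, by norm_num⟩⟩
  set h : F4L := ⟨fun _ => (1 : ℚ)/2, hh⟩
  have hfh : F4f h = (11 : ℤ) := by
    show ((3 * ((2:ℚ) * ((1:ℚ)/2)).num + 2 * (((2:ℚ) * ((1:ℚ)/2)).num + ((2:ℚ) * ((1:ℚ)/2)).num
      + ((2:ℚ) * ((1:ℚ)/2)).num + ((2:ℚ) * ((1:ℚ)/2)).num) : ℤ) : ZMod 6) = _
    norm_num
  refine ⟨(5 * (z.val : ℤ)) • h, ?_⟩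
  rw [map_zsmul, hfh, zsmul_eq_mul]
  push_cast
  have hz : ((z.val : ℕ) : ZMod 6) = z := by
    rw [ZMod.natCast_val, ZMod.cast_id]
  rw [hz]
  ring_nf
  rw [show (55 : ZMod 6) = 1 by decide, mul_one]

/-- The F₄ root lattice 𝓛 (vectors in ℚ⁴ whose doubles are integers, all even or all
odd) is an additive subgroup of ℚ⁴, the set L₀ of integral vectors with coordinate sum
divisible by 3 is an additive subgroup contained in 𝓛, and the quotient 𝓛/L₀ is
isomorphic to ℤ/6ℤ. -/
theorem F4_mod_L0_iso_Zmod6 :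
    ∃ L L0 : AddSubgroup (Fin 4 → ℚ),
      (L : Set (Fin 4 → ℚ)) =
        {v | (∀ i, ∃ m : ℤ, (m : ℚ) = 2 * v i) ∧
          ((∀ i, ∃ m : ℤ, Even m ∧ (m : ℚ) = 2 * v i) ∨
           (∀ i, ∃ m : ℤ, Odd m ∧ (m : ℚ) = 2 * v i))} ∧
      (L0 : Set (Fin 4 → ℚ)) =
        {v | ∃ k : Fin 4 → ℤ, (∀ i, (k i : ℚ) = v i) ∧
          (3 : ℤ) ∣ (k 0 + k 1 + k 2 + k 3)} ∧
      L0 ≤ L ∧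
      Nonempty ((L ⧸ L0.addSubgroupOf L) ≃+ ZMod 6) := by
  refine ⟨F4L, F4L0, rfl, rfl, ?_, ?_⟩
  · rintro v ⟨k, hk, hk3⟩
    exact ⟨fun i => ⟨2 * k i, by push_cast; rw [hk i]⟩,
      Or.inl fun i => ⟨2 * k i, even_two_mul _, by push_cast; rw [hk i]⟩⟩
  · have hker : F4f.ker = F4L0.addSubgroupOf F4L := by
      ext v
      rw [AddMonoidHom.mem_ker, AddSubgroup.mem_addSubgroupOf]
      exact F4f_ker v
    exact ⟨(QuotientAddGroup.quotientAddEquivOfEq hker.symm).trans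
      (QuotientAddGroup.quotientKerEquivOfSurjective F4f F4f_surj)⟩
end

section
/- For every n ≤ 4 and all integers z₁,…,zₙ, there is a common limit ℓ ∈ ℝ such that both averaged (n+1)-point pattern counts (1/(2R+1))·Σ_{x ∈ ℤ, |x| ≤ R} c₁(x mod 6)·c₁((x+z₁) mod 6)·⋯·c₁((x+zₙ) mod 6) and (1/(2R+1))·Σ_{x ∈ ℤ, |x| ≤ R} c₂(x mod 6)·c₂((x+z₁) mod 6)·⋯·c₂((x+zₙ) mod 6) converge to ℓ as R → ∞; that is, the two distinct weighted periodic point sets on ℤ determined by c₁ and c₂ have identical 2-, 3-, 4- and 5-point correlations. -/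
open Filter in
/-- The first weight function on ℤ/6ℤ, with values 11, 25, 42, 45, 31, 14. -/
def c1 : ZMod 6 → ℤ := ![11, 25, 42, 45, 31, 14]

/-- The second weight function on ℤ/6ℤ, with values 10, 21, 39, 46, 35, 17. -/
def c2 : ZMod 6 → ℤ := ![10, 21, 39, 46, 35, 17]

open Filter

/-- The `(n+1)`-point correlation sum over one period. -/
def corr (c : ZMod 6 → ℤ) (n : ℕ) (w : Fin n → ZMod 6) : ℤ :=
  ∑ r : ZMod 6, c r * ∏ i, c (r + w i)

set_option maxRecDepth 40000 in
lemma key0 : ∀ w : Fin 0 → ZMod 6, corr c1 0 w = corr c2 0 w := by decide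

set_option maxRecDepth 40000 in
lemma key1 : ∀ a : ZMod 6, corr c1 1 ![a] = corr c2 1 ![a] := by decide

set_option maxRecDepth 40000 in
lemma key2 : ∀ a b : ZMod 6, corr c1 2 ![a,b] = corr c2 2 ![a,b] := by decide

set_option maxRecDepth 40000 in
set_option maxHeartbeats 1000000 in
lemma key3 : ∀ a b c : ZMod 6, corr c1 3 ![a,b,c] = corr c2 3 ![a,b,c] := by decide

set_option maxRecDepth 40000 in
set_option maxHeartbeats 8000000 in
lemma key4 : ∀ a b c d : ZMod 6, corr c1 4 ![a,b,c,d] = corr c2 4 ![a,b,c,d] := by decide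

lemma keyn (n : ℕ) (hn : n ≤ 4) (w : Fin n → ZMod 6) :
    corr c1 n w = corr c2 n w := by
  interval_cases n
  · exact key0 w
  · have hw : w = ![w 0] := by funext i; fin_cases i <;> rfl
    rw [hw]; exact key1 _
  · have hw : w = ![w 0, w 1] := by funext i; fin_cases i <;> rfl
    rw [hw]; exact key2 _ _
  · have hw : w = ![w 0, w 1, w 2] := by funext i; fin_cases i <;> rfl
    rw [hw]; exact key3 _ _ _
  · have hw : w = ![w 0, w 1, w 2, w 3] := by funext i; fin_cases i <;> rfl
    rw [hw]; exact key4 _ _ _ _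

lemma block_sum (F : ZMod 6 → ℝ) (a : ℤ) :
    ∑ x ∈ Finset.Icc a (a + 5), F (x : ZMod 6) = ∑ r : ZMod 6, F r := by
  refine Finset.sum_nbij' (fun x => (x : ZMod 6))
    (fun r => a + ((r - (a : ZMod 6)).val : ℤ)) (fun x _ => Finset.mem_univ _) ?_ ?_ ?_ ?_
  · intro r _
    have h := ZMod.val_lt (r - (a : ZMod 6))
    simp only [Finset.mem_Icc]
    omega
  · intro x hx
    simp only [Finset.mem_Icc] at hx
    have h1 : ((x : ZMod 6) - (a : ZMod 6)) = (((x - a).toNat : ℕ) : ZMod 6) := by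
      rw [show (((x - a).toNat : ℕ) : ZMod 6) = ((x - a : ℤ) : ZMod 6) by
        rw [← Int.cast_natCast, Int.toNat_of_nonneg (by omega : (0:ℤ) ≤ x - a)]]
      push_cast; ring
    show a + (((x : ZMod 6) - (a : ZMod 6)).val : ℤ) = x
    rw [h1, ZMod.val_natCast, Nat.mod_eq_of_lt (by omega)]
    omega
  · intro r _
    show ((a + (((r - (a : ZMod 6)).val : ℕ) : ℤ) : ℤ) : ZMod 6) = r
    push_cast
    rw [ZMod.natCast_rightInverse (r - (a : ZMod 6))]
    ring
  · intro x _; rfl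

lemma split_sum (F : ZMod 6 → ℝ) (R : ℕ) :
    ∑ x ∈ Finset.Icc (-((R:ℕ)+6 : ℤ)) (((R:ℕ)+6 : ℤ)), F (x : ZMod 6)
      = (∑ r : ZMod 6, F r) + ((∑ x ∈ Finset.Icc (-(R : ℤ)) (R : ℤ), F (x : ZMod 6))
        + (∑ r : ZMod 6, F r)) := by
  have hset : Finset.Icc (-((R:ℕ)+6 : ℤ)) (((R:ℕ)+6 : ℤ))
      = Finset.Icc (-((R:ℕ):ℤ) - 6) (-((R:ℕ):ℤ) - 6 + 5)
        ∪ (Finset.Icc (-(R : ℤ)) (R : ℤ) ∪ Finset.Icc ((R:ℤ)+1) ((R:ℤ)+1+5)) := by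
    ext x
    simp only [Finset.mem_Icc, Finset.mem_union]
    omega
  rw [hset, Finset.sum_union, Finset.sum_union, block_sum, block_sum]
  · simp only [Finset.disjoint_left, Finset.mem_Icc]
    intro x h1 h2
    omega
  · simp only [Finset.disjoint_left, Finset.mem_Icc, Finset.mem_union]
    intro x h1 h2
    rcases h2 with h2 | h2 <;> omega

lemma tendsto_avg (F : ZMod 6 → ℝ) :
    Tendsto (fun R : ℕ => (1 / (2 * (R : ℝ) + 1)) *
        ∑ x ∈ Finset.Icc (-(R : ℤ)) (R : ℤ), F (x : ZMod 6))
      atTop (nhds ((∑ r : ZMod 6, F r) / 6)) := by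
  set S : ℝ := ∑ r : ZMod 6, F r with hS
  set Sm : ℕ → ℝ := fun R => ∑ x ∈ Finset.Icc (-(R : ℤ)) (R : ℤ), F (x : ZMod 6) with hSm
  have hstep : ∀ R : ℕ, Sm (R + 6) = Sm R + 2 * S := by
    intro R
    have := split_sum F R
    simp only [hSm]
    push_cast
    push_cast at this
    rw [this]; ring
  have hmul : ∀ q r : ℕ, Sm (6 * q + r) = q * (2 * S) + Sm r := by
    intro q
    induction q with
    | zero => intro r; simp
    | succ k ih =>
      intro r
      have : 6 * (k + 1) + r = (6 * k + r) + 6 := by ring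
      rw [this, hstep, ih]
      push_cast
      ring
  have hid : ∀ R : ℕ, (1 / (2 * (R : ℝ) + 1)) * Sm R
      = S / 6 + (Sm (R % 6) - (2 * ((R % 6 : ℕ) : ℝ) + 1) * (S / 6)) / (2 * (R : ℝ) + 1) := by
    intro R
    have hd : R = 6 * (R / 6) + R % 6 := (Nat.div_add_mod R 6).symm
    have h1 : Sm R = (R / 6 : ℕ) * (2 * S) + Sm (R % 6) := by
      conv_lhs => rw [hd]
      exact hmul _ _
    have hR : (R : ℝ) = 6 * ((R / 6 : ℕ) : ℝ) + ((R % 6 : ℕ) : ℝ) := by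
      exact_mod_cast congrArg (Nat.cast : ℕ → ℝ) hd
    have hpos : (2 * (R : ℝ) + 1) ≠ 0 := by positivity
    rw [h1, hR]
    field_simp
    ring
  have hC : ∀ R : ℕ, |Sm (R % 6) - (2 * ((R % 6 : ℕ) : ℝ) + 1) * (S / 6)|
      ≤ ∑ j ∈ Finset.range 6, |Sm j - (2 * (j : ℝ) + 1) * (S / 6)| := by
    intro R
    exact Finset.single_le_sum (f := fun j => |Sm j - (2 * (j : ℝ) + 1) * (S / 6)|)
      (fun j _ => abs_nonneg _) (Finset.mem_range.mpr (Nat.mod_lt _ (by norm_num)))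
  set C : ℝ := ∑ j ∈ Finset.range 6, |Sm j - (2 * (j : ℝ) + 1) * (S / 6)| with hCdef
  have hdenom : Tendsto (fun R : ℕ => 2 * (R : ℝ) + 1) atTop atTop := by
    apply tendsto_atTop_add_const_right
    exact (tendsto_natCast_atTop_atTop (R := ℝ)).const_mul_atTop (by norm_num)
  have h0 : Tendsto (fun R : ℕ =>
      (Sm (R % 6) - (2 * ((R % 6 : ℕ) : ℝ) + 1) * (S / 6)) / (2 * (R : ℝ) + 1)) atTop (nhds 0) := by
    apply squeeze_zero_norm (a := fun R : ℕ => C / (2 * (R : ℝ) + 1))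
    · intro R
      have hp : (0:ℝ) < 2 * (R : ℝ) + 1 := by positivity
      rw [Real.norm_eq_abs, abs_div, abs_of_pos hp]
      exact (div_le_div_iff_of_pos_right hp).mpr (hC R)
    · exact tendsto_const_nhds.div_atTop hdenom
  have h := (tendsto_const_nhds (x := S / 6) (f := atTop (α := ℕ))).add h0
  rw [add_zero] at h
  exact h.congr fun R => (hid R).symm

lemma corr_real (c : ZMod 6 → ℤ) (n : ℕ) (w : Fin n → ZMod 6) :
    ∑ r : ZMod 6, ((c r : ℤ) : ℝ) * ∏ i, ((c (r + w i) : ℤ) : ℝ) = ((corr c n w : ℤ) : ℝ) := by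
  simp only [corr]
  push_cast
  rfl

open Filter in
/-- The two distinct weighted periodic point sets on ℤ determined by `c1` and `c2`
(the integer `x` carries weight `cᵢ(x mod 6)`) have identical 2-, 3-, 4- and 5-point
correlations: for every `n ≤ 4` the averaged `(n+1)`-point pattern counts of the two
systems converge to a common limit. -/
theorem correlations_up_to_five_agree (n : ℕ) (hn : n ≤ 4) (z : Fin n → ℤ) :
    ∃ l : ℝ,
      Tendsto
        (fun R : ℕ => (1 / (2 * (R : ℝ) + 1)) *
          ∑ x ∈ Finset.Icc (-(R : ℤ)) (R : ℤ),
            ((c1 (x : ZMod 6) : ℤ) : ℝ) * ∏ i, ((c1 ((x + z i : ℤ) : ZMod 6) : ℤ) : ℝ))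
        atTop (nhds l) ∧
      Tendsto
        (fun R : ℕ => (1 / (2 * (R : ℝ) + 1)) *
          ∑ x ∈ Finset.Icc (-(R : ℤ)) (R : ℤ),
            ((c2 (x : ZMod 6) : ℤ) : ℝ) * ∏ i, ((c2 ((x + z i : ℤ) : ZMod 6) : ℤ) : ℝ))
        atTop (nhds l) := by
  set w : Fin n → ZMod 6 := fun i => ((z i : ℤ) : ZMod 6) with hw
  have hfun : ∀ (c : ZMod 6 → ℤ) (R : ℕ),
      (∑ x ∈ Finset.Icc (-(R : ℤ)) (R : ℤ),
        ((c (x : ZMod 6) : ℤ) : ℝ) * ∏ i, ((c ((x + z i : ℤ) : ZMod 6) : ℤ) : ℝ))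
      = ∑ x ∈ Finset.Icc (-(R : ℤ)) (R : ℤ),
          (fun r : ZMod 6 => ((c r : ℤ) : ℝ) * ∏ i, ((c (r + w i) : ℤ) : ℝ)) (x : ZMod 6) := by
    intro c R
    refine Finset.sum_congr rfl fun x _ => ?_
    simp only [Int.cast_add, hw]
  refine ⟨((corr c1 n w : ℤ) : ℝ) / 6, ?_, ?_⟩
  · have h := tendsto_avg (fun r : ZMod 6 => ((c1 r : ℤ) : ℝ) * ∏ i, ((c1 (r + w i) : ℤ) : ℝ))
    rw [corr_real] at h
    exact h.congr fun R => by rw [hfun c1 R]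
  · have h := tendsto_avg (fun r : ZMod 6 => ((c2 r : ℤ) : ℝ) * ∏ i, ((c2 (r + w i) : ℤ) : ℝ))
    rw [corr_real, ← keyn n hn w] at h
    exact h.congr fun R => by rw [hfun c2 R]
end
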